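/- Let K be an algebraically closed field of characteristic zero and P ∈ K[x,y] satisfy P_{xy}^2 − P_{xx} P_{yy} = 0 (i.e., the Hessian determinant of P vanishes). Then there exist constants a, b, c_1, c_2 ∈ K and a univariate polynomial f ∈ K[t] with f(0) = 0 such that P_y = b·f(ax + by) + c_2 and P_x = a·f(ax + by) − c_1. -/

import Mathlib

open MvPolynomial

set_option linter.unusedSectionVars false

namespace Stmt11Aux

variable {K : Type*} [Field K] [CharZero K]

local notation "R2" => MvPolynomial (Fin 2) K

lemma fs_apply_sub (m : Fin 2 →₀ ℕ) (i j : Fin 2) :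
    ((m - Finsupp.single i 1 : Fin 2 →₀ ℕ)) j = m j - (Finsupp.single i 1 : Fin 2 →₀ ℕ) j :=
  Finsupp.tsub_apply m _ j

lemma finsupp_sub_single_add {i : Fin 2} {m : Fin 2 →₀ ℕ} (hm : m i ≠ 0) :
    (m - Finsupp.single i 1) + Finsupp.single i 1 = m := by
  ext j
  rw [Finsupp.add_apply, fs_apply_sub]
  by_cases hj : i = j
  · subst hj; rw [Finsupp.single_eq_same]; omega
  · rw [Finsupp.single_eq_of_ne' hj]; omega

lemma coeff_pderiv (i : Fin 2) (m : Fin 2 →₀ ℕ) (p : R2) :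
    coeff m (pderiv i p) = ((m i : K) + 1) * coeff (m + Finsupp.single i 1) p := by
  induction p using MvPolynomial.induction_on' with
  | add p q hp hq => simp [hp, hq, mul_add]
  | monomial u a =>
    rw [pderiv_monomial]
    rw [coeff_monomial, coeff_monomial]
    by_cases h : u i = 0
    · have h1 : u - Finsupp.single i 1 = u := by
        ext j
        rw [fs_apply_sub]
        by_cases hj : i = j
        · subst hj; rw [Finsupp.single_eq_same]; omega
        · rw [Finsupp.single_eq_of_ne' hj]; omega
      rw [h1]
      have h2 : u ≠ m + Finsupp.single i 1 := by
        intro he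
        apply absurd h
        rw [he]; simp
      rw [if_neg h2]
      split_ifs with h3
      · simp [h]
      · ring
    · have h1 : u - Finsupp.single i 1 = m ↔ u = m + Finsupp.single i 1 := by
        constructor
        · intro he
          ext j
          have hj2 : ((u - Finsupp.single i 1 : Fin 2 →₀ ℕ)) j = m j := by rw [he]
          rw [fs_apply_sub] at hj2
          rw [Finsupp.add_apply]
          by_cases hj : i = j
          · subst hj; rw [Finsupp.single_eq_same] at hj2 ⊢; omega
          · rw [Finsupp.single_eq_of_ne' hj] at hj2 ⊢; omega
        · intro he
          subst he
          ext j
          rw [fs_apply_sub, Finsupp.add_apply]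
          by_cases hj : i = j
          · subst hj; rw [Finsupp.single_eq_same]; omega
          · rw [Finsupp.single_eq_of_ne' hj]; omega
      by_cases h2 : u = m + Finsupp.single i 1
      · rw [if_pos (h1.mpr h2), if_pos h2]
        have : u i = m i + 1 := by rw [h2]; simp
        rw [this]
        push_cast
        ring
      · rw [if_neg (fun hh => h2 (h1.mp hh)), if_neg h2]
        ring

/-- if `pderiv i Q = 0` then coefficients with `m i ≠ 0` vanish. -/
lemma coeff_eq_zero_of_pderiv_eq_zero {i : Fin 2} {Q : R2} (h : pderiv i Q = 0)
    {m : Fin 2 →₀ ℕ} (hm : m i ≠ 0) : coeff m Q = 0 := by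
  have h1 : coeff (m - Finsupp.single i 1) (pderiv i Q) = 0 := by rw [h]; simp
  rw [coeff_pderiv, finsupp_sub_single_add hm] at h1
  have h3 : ((((m - Finsupp.single i 1 : Fin 2 →₀ ℕ)) i : K) + 1) ≠ 0 :=
    Nat.cast_add_one_ne_zero _
  exact (mul_eq_zero.mp h1).resolve_left h3

lemma totalDegree_pderiv_lt {i : Fin 2} {p : R2} (h : pderiv i p ≠ 0) :
    (pderiv i p).totalDegree < p.totalDegree := by
  have key : ∀ m ∈ (pderiv i p).support, (m.sum fun _ e => e) + 1 ≤ p.totalDegree := by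
    intro m hm
    rw [mem_support_iff, coeff_pderiv] at hm
    have h2 : coeff (m + Finsupp.single i 1) p ≠ 0 := by
      intro hz; rw [hz, mul_zero] at hm; exact hm rfl
    have h3 := le_totalDegree (mem_support_iff.mpr h2)
    have h4 : ((m + Finsupp.single i 1).sum fun _ e => e) = (m.sum fun _ e => e) + 1 := by
      rw [Finsupp.sum_add_index (by simp) (by simp)]
      simp
    omega
  rw [totalDegree]
  have hne : (pderiv i p).support.Nonempty := by
    rw [Finset.nonempty_iff_ne_empty, Ne, support_eq_empty]; exact h
  obtain ⟨m, hm, he⟩ := Finset.exists_mem_eq_sup _ hne (fun m : Fin 2 →₀ ℕ => m.sum fun _ e => e)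
  rw [he]
  have := key m hm
  omega

omit [CharZero K] in
lemma pderiv_pderiv_comm (i j : Fin 2) (p : R2) :
    pderiv i (pderiv j p) = pderiv j (pderiv i p) := by
  induction p using MvPolynomial.induction_on with
  | C a => simp [pderiv_C]
  | add p q hp hq => simp [hp, hq]
  | mul_X p k hp =>
    simp only [pderiv_mul, map_add, hp, pderiv_mul]
    have hXi : ∀ (i j : Fin 2), pderiv i (pderiv j (X k : R2)) = 0 := by
      intro i j
      by_cases h : j = k
      · subst h; rw [pderiv_X_self]; simp [pderiv_one]
      · rw [pderiv_X_of_ne (fun hh => h hh.symm)]; simp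
    rw [hXi, hXi]
    ring

/-- both partials vanish → constant -/
lemma eq_C_of_pderiv_eq_zero {Q : R2} (h0 : pderiv 0 Q = 0) (h1 : pderiv 1 Q = 0) :
    ∃ c : K, Q = C c := by
  refine ⟨coeff 0 Q, ?_⟩
  ext m
  rw [coeff_C]
  by_cases hm : (0 : Fin 2 →₀ ℕ) = m
  · rw [if_pos hm, ← hm]
  · rw [if_neg hm]
    have : m 0 ≠ 0 ∨ m 1 ≠ 0 := by
      by_contra hc
      push_neg at hc
      apply hm
      ext j
      rw [Finsupp.coe_zero, Pi.zero_apply]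
      fin_cases j
      · exact hc.1.symm
      · exact hc.2.symm
    rcases this with h | h
    · exact coeff_eq_zero_of_pderiv_eq_zero h0 h
    · exact coeff_eq_zero_of_pderiv_eq_zero h1 h

/-- `pderiv 0 Q = 0` → `Q` is a polynomial in `X 1`. -/
lemma eq_aeval_X1_of_pderiv0_eq_zero {Q : R2} (h : pderiv 0 Q = 0) :
    ∃ g : Polynomial K, Q = Polynomial.aeval (X 1 : R2) g := by
  classical
  refine ⟨∑ j ∈ Finset.range (Q.totalDegree + 1),
    Polynomial.C (coeff (Finsupp.single 1 j) Q) * Polynomial.X ^ j, ?_⟩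
  rw [map_sum]
  ext m
  rw [coeff_sum]
  have hterm : ∀ j, coeff m (Polynomial.aeval (X 1 : R2)
      (Polynomial.C (coeff (Finsupp.single 1 j) Q) * Polynomial.X ^ j)) =
      if Finsupp.single 1 j = m then coeff (Finsupp.single 1 j) Q else 0 := by
    intro j
    rw [map_mul, map_pow, Polynomial.aeval_X, Polynomial.aeval_C]
    have : (algebraMap K R2) (coeff (Finsupp.single 1 j) Q) * (X 1 : R2) ^ j
        = monomial (Finsupp.single 1 j) (coeff (Finsupp.single 1 j) Q) := by
      rw [X_pow_eq_monomial]
      rw [algebraMap_eq, C_mul_monomial, mul_one]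
    rw [this, coeff_monomial]
  simp_rw [hterm]
  by_cases hm0 : m 0 = 0
  · have hm : m = Finsupp.single 1 (m 1) := by
      ext j
      fin_cases j
      · simpa [Finsupp.single_eq_of_ne] using hm0
      · simp
    have hcond : ∀ j : ℕ, ((Finsupp.single (1 : Fin 2) j = m) ↔ (j = m 1)) := by
      intro j
      constructor
      · intro he
        have := congrArg (fun f : Fin 2 →₀ ℕ => f 1) he
        simpa using this
      · intro he
        rw [he, ← hm]
    simp_rw [hcond]
    by_cases hle : m 1 < Q.totalDegree + 1
    · rw [Finset.sum_congr rfl (fun j _ => by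
        rw [show (if j = m 1 then coeff (Finsupp.single 1 j) Q else 0)
          = (if j = m 1 then coeff m Q else 0) by
            split_ifs with hj
            · rw [hj, ← hm]
            · rfl])]
      rw [Finset.sum_ite_eq' (Finset.range (Q.totalDegree + 1)) (m 1) (fun _ => coeff m Q)]
      rw [if_pos (Finset.mem_range.mpr hle)]
    · rw [Finset.sum_eq_zero (fun j hj => by
        rw [if_neg]
        rw [Finset.mem_range] at hj
        omega)]
      · apply coeff_eq_zero_of_totalDegree_lt
        have hmz : m 1 ≠ 0 := by omega
        have : (∑ i ∈ m.support, m i) = m 1 := by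
          conv_lhs => rw [hm]
          rw [Finsupp.support_single_ne_zero 1 hmz]
          simp
        omega
  · rw [Finset.sum_eq_zero (fun j hj => by
      rw [if_neg]
      intro he
      apply hm0
      rw [← he]
      rw [Finsupp.single_eq_of_ne (by decide)])]
    exact coeff_eq_zero_of_pderiv_eq_zero h hm0

/-- `pderiv 1 Q = 0` → `Q` is a polynomial in `X 0`. -/
lemma eq_aeval_X0_of_pderiv1_eq_zero {Q : R2} (h : pderiv 1 Q = 0) :
    ∃ g : Polynomial K, Q = Polynomial.aeval (X 0 : R2) g := by
  classical
  set e : Fin 2 ≃ Fin 2 := Equiv.swap 0 1 with he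
  have h0 : pderiv 0 (rename e Q) = 0 := by
    have : (e : Fin 2 → Fin 2) 1 = 0 := by simp [he]
    calc pderiv 0 (rename e Q) = pderiv (e 1) (rename e Q) := by rw [this]
    _ = rename e (pderiv 1 Q) := pderiv_rename e.injective 1 Q
    _ = 0 := by rw [h, map_zero]
  obtain ⟨g, hg⟩ := eq_aeval_X1_of_pderiv0_eq_zero h0
  refine ⟨g, ?_⟩
  have : rename (e : Fin 2 → Fin 2) (rename (e : Fin 2 → Fin 2) Q) = Q := by
    rw [rename_rename]
    have : (e : Fin 2 → Fin 2) ∘ e = id := by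
      funext j; simp [he]
    rw [this, rename_id, AlgHom.id_apply]
  calc Q = rename e (rename e Q) := this.symm
  _ = rename e (Polynomial.aeval (X 1 : R2) g) := by rw [← hg]
  _ = Polynomial.aeval (rename e (X 1 : R2)) g := by
      rw [Polynomial.aeval_algHom_apply (rename (e : Fin 2 → Fin 2)) (X 1 : R2) g]
  _ = Polynomial.aeval (X 0 : R2) g := by rw [rename_X]; norm_num [he]

lemma fin2_cases (k : Fin 2) : k = 0 ∨ k = 1 := by
  fin_cases k
  · exact Or.inl rfl
  · exact Or.inr rfl

/-- chain rule for bind₁ substitution in two variables -/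
lemma pderiv_bind₁ (ρ : Fin 2 → R2) (i : Fin 2) (Q : R2) :
    pderiv i (bind₁ ρ Q) = bind₁ ρ (pderiv 0 Q) * pderiv i (ρ 0)
      + bind₁ ρ (pderiv 1 Q) * pderiv i (ρ 1) := by
  induction Q using MvPolynomial.induction_on with
  | C a => simp [bind₁_C_right]
  | add p q hp hq => simp only [map_add, pderiv_mul, hp, hq]; ring
  | mul_X p k hp =>
    rw [map_mul, bind₁_X_right, pderiv_mul, hp]
    have e0 : pderiv 0 (p * X k) = pderiv 0 p * X k + p * pderiv 0 (X k) := pderiv_mul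
    have e1 : pderiv 1 (p * X k) = pderiv 1 p * X k + p * pderiv 1 (X k) := pderiv_mul
    rw [e0, e1]
    rcases fin2_cases k with rfl | rfl <;>
      simp only [pderiv_X_self, pderiv_X_of_ne (show (1 : Fin 2) ≠ 0 by decide),
        pderiv_X_of_ne (show (0 : Fin 2) ≠ 1 by decide), map_add, map_mul, bind₁_X_right,
        mul_one, mul_zero, add_zero, zero_add, map_zero] <;> ring

/-- chain rule for aeval of a univariate polynomial -/
lemma pderiv_aeval (L : R2) (g : Polynomial K) (i : Fin 2) :
    pderiv i (Polynomial.aeval L g) =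
      Polynomial.aeval L (Polynomial.derivative g) * pderiv i L := by
  induction g using Polynomial.induction_on' with
  | add p q hp hq => simp only [map_add, hp, hq]; ring
  | monomial n a =>
    rw [Polynomial.aeval_monomial, Polynomial.derivative_monomial, Polynomial.aeval_monomial]
    rw [pderiv_mul]
    have hc : pderiv i ((algebraMap K R2) a) = 0 := by
      rw [algebraMap_eq]; exact pderiv_C
    rw [hc, pderiv_pow]
    rw [map_mul (algebraMap K R2), show ((algebraMap K R2) (n : K)) = (n : R2) by
      rw [algebraMap_eq, C_eq_coe_nat]]
    ring

/-- directional derivative vanishing: Q is a polynomial in a X0 + b X1 -/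
lemma eq_aeval_linear {a b : K} {Q : R2} (hab : b ≠ 0)
    (hQ : C b * pderiv 0 Q = C a * pderiv 1 Q) :
    ∃ g : Polynomial K, Q = Polynomial.aeval (C a * X 0 + C b * X 1 : R2) g := by
  classical
  set ρ : Fin 2 → R2 := fun j => if j = 0 then X 0 else C b⁻¹ * (X 1 - C a * X 0) with hρ
  set σ' : Fin 2 → R2 := fun j => if j = 0 then X 0 else C a * X 0 + C b * X 1 with hσ
  have hρ0 : ρ 0 = X 0 := by simp [hρ]
  have hρ1 : ρ 1 = C b⁻¹ * (X 1 - C a * X 0) := by simp [hρ]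
  have hσ0 : σ' 0 = X 0 := by simp [hσ]
  have hσ1 : σ' 1 = C a * X 0 + C b * X 1 := by simp [hσ]
  have h0 : pderiv 0 (bind₁ ρ Q) = 0 := by
    rw [pderiv_bind₁, hρ0, hρ1]
    rw [pderiv_X_self]
    have : pderiv (0 : Fin 2) (C b⁻¹ * (X 1 - C a * X 0) : R2) = C b⁻¹ * (0 - C a * 1) := by
      rw [pderiv_C_mul, map_sub, pderiv_X_of_ne (by decide), pderiv_C_mul, pderiv_X_self]
    rw [this]
    have hb : (C b : R2) ≠ 0 := fun hc => hab (by simpa using hc)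
    apply mul_left_cancel₀ hb
    rw [mul_zero, mul_add]
    calc C b * (bind₁ ρ (pderiv 0 Q) * 1) + C b * (bind₁ ρ (pderiv 1 Q) * (C b⁻¹ * (0 - C a * 1)))
        = C b * bind₁ ρ (pderiv 0 Q) - (C b * C b⁻¹) * (C a * bind₁ ρ (pderiv 1 Q)) := by ring
      _ = bind₁ ρ (C b * pderiv 0 Q) - (C b * C b⁻¹) * bind₁ ρ (C a * pderiv 1 Q) := by
          rw [map_mul, map_mul, algHom_C, algHom_C, algebraMap_eq]
      _ = 0 := by
          rw [hQ, ← C_mul, mul_inv_cancel₀ hab, C_1, one_mul]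
          ring
  obtain ⟨g, hg⟩ := eq_aeval_X1_of_pderiv0_eq_zero h0
  refine ⟨g, ?_⟩
  have hcomp : bind₁ σ' (bind₁ ρ Q) = Q := by
    rw [bind₁_bind₁]
    have : (fun j => bind₁ σ' (ρ j)) = X := by
      funext j
      rcases fin2_cases j with rfl | rfl
      · rw [hρ0, bind₁_X_right, hσ0]
      · rw [hρ1]
        rw [map_mul, algHom_C, map_sub, bind₁_X_right, map_mul, algHom_C, bind₁_X_right]
        rw [hσ0, hσ1, algebraMap_eq]
        rw [show (C a * X 0 + C b * X 1 - C a * X 0 : R2) = C b * X 1 by ring]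
        rw [← mul_assoc, ← C_mul, inv_mul_cancel₀ hab, C_1, one_mul]
    rw [this, bind₁_X_left]
    rfl
  calc Q = bind₁ σ' (bind₁ ρ Q) := hcomp.symm
    _ = bind₁ σ' (Polynomial.aeval (X 1 : R2) g) := by rw [← hg]
    _ = Polynomial.aeval (bind₁ σ' (X 1 : R2)) g := by
        rw [Polynomial.aeval_algHom_apply (bind₁ σ') (X 1 : R2) g]
    _ = Polynomial.aeval (C a * X 0 + C b * X 1 : R2) g := by
        rw [bind₁_X_right, hσ1]

lemma finsupp_degree_eq_sum (m : Fin 2 →₀ ℕ) :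
    m.degree = (m.sum fun _ e => e) := by
  rfl

lemma hc_top_ne_zero {p : R2} (hp : p ≠ 0) :
    homogeneousComponent p.totalDegree p ≠ 0 := by
  have hne : p.support.Nonempty := by
    rw [Finset.nonempty_iff_ne_empty, Ne, support_eq_empty]; exact hp
  obtain ⟨m, hm, he⟩ := Finset.exists_mem_eq_sup _ hne (fun m : Fin 2 →₀ ℕ => m.sum fun _ e => e)
  intro hz
  have : coeff m (homogeneousComponent p.totalDegree p) = coeff m p := by
    rw [coeff_homogeneousComponent, if_pos]
    rw [finsupp_degree_eq_sum, totalDegree, he]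
  rw [hz, coeff_zero] at this
  exact (mem_support_iff.mp hm) this.symm

lemma remainder_support {p : R2} {m : Fin 2 →₀ ℕ}
    (hm : m ∈ (p - homogeneousComponent p.totalDegree p).support) :
    (m.sum fun _ e => e) < p.totalDegree := by
  rw [mem_support_iff, coeff_sub, coeff_homogeneousComponent] at hm
  by_cases hd : m.degree = p.totalDegree
  · rw [if_pos hd, sub_self] at hm; exact absurd rfl hm
  · rw [if_neg hd, sub_zero] at hm
    have := le_totalDegree (mem_support_iff.mpr hm)
    rw [finsupp_degree_eq_sum] at hd
    omega

lemma remainder_td_lt {p : R2} (h : p - homogeneousComponent p.totalDegree p ≠ 0) :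
    (p - homogeneousComponent p.totalDegree p).totalDegree < p.totalDegree := by
  set r := p - homogeneousComponent p.totalDegree p with hr
  have hne : r.support.Nonempty := by
    rw [Finset.nonempty_iff_ne_empty, Ne, support_eq_empty]; exact h
  obtain ⟨m, hm, he⟩ := Finset.exists_mem_eq_sup _ hne (fun m : Fin 2 →₀ ℕ => m.sum fun _ e => e)
  rw [totalDegree, he]
  exact remainder_support hm

lemma hc_top_mul (p g : R2) (hp : p ≠ 0) (hg : g ≠ 0) :
    homogeneousComponent (p.totalDegree + g.totalDegree) (p * g) =
      homogeneousComponent p.totalDegree p * homogeneousComponent g.totalDegree g := by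
  set d1 := p.totalDegree
  set d2 := g.totalDegree
  set hp' := homogeneousComponent d1 p with hhp
  set hg' := homogeneousComponent d2 g with hhg
  have hsplit : p * g = hp' * hg' + (hp' * (g - hg') + (p - hp') * g) := by ring
  rw [hsplit, map_add, map_add]
  have h1 : homogeneousComponent (d1 + d2) (hp' * hg') = hp' * hg' := by
    have hmem : hp' * hg' ∈ homogeneousSubmodule (Fin 2) K (d1 + d2) := by
      rw [mem_homogeneousSubmodule]
      exact (homogeneousComponent_isHomogeneous d1 p).mul (homogeneousComponent_isHomogeneous d2 g)
    rw [homogeneousComponent_of_mem hmem, if_pos rfl]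
  have h2 : homogeneousComponent (d1 + d2) (hp' * (g - hg')) = 0 := by
    by_cases hz : g - hg' = 0
    · rw [hz, mul_zero, map_zero]
    · apply homogeneousComponent_eq_zero
      calc (hp' * (g - hg')).totalDegree ≤ hp'.totalDegree + (g - hg').totalDegree :=
            totalDegree_mul _ _
        _ < d1 + d2 := by
            have ha : hp'.totalDegree ≤ d1 := (homogeneousComponent_isHomogeneous d1 p).totalDegree_le
            have hb : (g - hg').totalDegree < d2 := remainder_td_lt hz
            omega
  have h3 : homogeneousComponent (d1 + d2) ((p - hp') * g) = 0 := by
    by_cases hz : p - hp' = 0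
    · rw [hz, zero_mul, map_zero]
    · apply homogeneousComponent_eq_zero
      calc ((p - hp') * g).totalDegree ≤ (p - hp').totalDegree + g.totalDegree :=
            totalDegree_mul _ _
        _ < d1 + d2 := by
            have hb : (p - hp').totalDegree < d1 := remainder_td_lt hz
            omega
  rw [h1, h2, h3]
  ring

lemma totalDegree_le_of_dvd {p q : R2} (h : p ∣ q) (hq : q ≠ 0) :
    p.totalDegree ≤ q.totalDegree := by
  obtain ⟨g, rfl⟩ := h
  have hp : p ≠ 0 := fun hz => hq (by rw [hz, zero_mul])
  have hg : g ≠ 0 := fun hz => hq (by rw [hz, mul_zero])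
  have h1 : homogeneousComponent (p.totalDegree + g.totalDegree) (p * g) ≠ 0 := by
    rw [hc_top_mul p g hp hg]
    exact mul_ne_zero (hc_top_ne_zero hp) (hc_top_ne_zero hg)
  by_contra hlt
  push_neg at hlt
  have : (p * g).totalDegree < p.totalDegree + g.totalDegree := by omega
  exact h1 (homogeneousComponent_eq_zero _ _ this)

lemma pderiv_eq_zero_of_self_dvd {i : Fin 2} {π : R2} (h : π ∣ pderiv i π) :
    pderiv i π = 0 := by
  by_contra hne
  have h1 := totalDegree_le_of_dvd h hne
  have h2 := totalDegree_pderiv_lt hne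
  omega

lemma pderiv_eq_zero_of_totalDegree_eq_zero {i : Fin 2} {Q : R2} (h : Q.totalDegree = 0) :
    pderiv i Q = 0 := by
  ext m
  rw [coeff_pderiv, coeff_zero]
  have : coeff (m + Finsupp.single i 1) Q = 0 := by
    rw [← not_ne_iff, ← mem_support_iff]
    intro hmem
    have := (totalDegree_eq_zero_iff (Fin 2) Q).mp h _ hmem i
    simp at this
  rw [this, mul_zero]

lemma sum_support_eq (m : Fin 2 →₀ ℕ) : (∑ i ∈ m.support, m i) = (m.sum fun _ e => e) := rfl

lemma sum_add_single (m : Fin 2 →₀ ℕ) (i : Fin 2) :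
    ((m + Finsupp.single i 1).sum fun _ e => e) = (m.sum fun _ e => e) + 1 := by
  rw [Finsupp.sum_add_index (by simp) (by simp)]
  simp

lemma coeff_X_mul_pderiv (i : Fin 2) (m : Fin 2 →₀ ℕ) (e : R2) :
    coeff m (X i * pderiv i e) = (m i : K) * coeff m e := by
  classical
  rw [coeff_X_mul']
  by_cases h : i ∈ m.support
  · rw [if_pos h]
    have hmi : m i ≠ 0 := Finsupp.mem_support_iff.mp h
    rw [coeff_pderiv, finsupp_sub_single_add hmi]
    have : (((m - Finsupp.single i 1 : Fin 2 →₀ ℕ)) i : K) + 1 = (m i : K) := by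
      have h2 : ((m - Finsupp.single i 1 : Fin 2 →₀ ℕ)) i = m i - 1 := by
        rw [Finsupp.tsub_apply, Finsupp.single_eq_same]
      rw [h2]
      have : (1:ℕ) ≤ m i := Nat.one_le_iff_ne_zero.mpr hmi
      push_cast [Nat.cast_sub this]
      ring
    rw [this]
  · rw [if_neg h]
    have : m i = 0 := Finsupp.notMem_support_iff.mp h
    rw [this]
    simp

/-- Euler-type eigenvalue contradiction -/
lemma euler_eq_zero {e : R2} {k b c : K} (hk : k ≠ 0)
    (heq : (C k * X 0 + C b) * pderiv 0 e + (C k * X 1 + C c) * pderiv 1 e = C (-(3*k)) * e) :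
    e = 0 := by
  by_contra hne
  have hre : C k * (X 0 * pderiv 0 e) + C b * pderiv 0 e
      + (C k * (X 1 * pderiv 1 e) + C c * pderiv 1 e) = C (-(3*k)) * e := by
    rw [← heq]; ring
  have hsup : e.support.Nonempty := by
    rw [Finset.nonempty_iff_ne_empty, Ne, support_eq_empty]; exact hne
  obtain ⟨m, hm, he⟩ := Finset.exists_mem_eq_sup _ hsup (fun m : Fin 2 →₀ ℕ => m.sum fun _ e => e)
  have hcoeff := congrArg (coeff m) hre
  have hbig : ∀ i : Fin 2, coeff (m + Finsupp.single i 1) e = 0 := by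
    intro i
    apply coeff_eq_zero_of_totalDegree_lt
    rw [sum_support_eq, sum_add_single]
    rw [totalDegree, he]
    omega
  simp only [coeff_add, coeff_C_mul, coeff_X_mul_pderiv, coeff_pderiv] at hcoeff
  rw [hbig 0, hbig 1] at hcoeff
  have hc0 : coeff m e ≠ 0 := mem_support_iff.mp hm
  have : k * ((m 0 : K) + (m 1 : K) + 3) * coeff m e = 0 := by
    linear_combination hcoeff
  rcases mul_eq_zero.mp this with h | h
  · rcases mul_eq_zero.mp h with h' | h'
    · exact hk h'
    · have : ((m 0 + m 1 + 3 : ℕ) : K) ≠ 0 := Nat.cast_ne_zero.mpr (by omega)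
      push_cast at this
      exact this h'
  · exact hc0 h

/-- rank-one factorization from w² = r·s -/
lemma rank_one_factor {r w s : R2} (hr : r ≠ 0) (hw : w ≠ 0) (hrs : w^2 = r * s) :
    ∃ e m n : R2, e ≠ 0 ∧ m ≠ 0 ∧ n ≠ 0 ∧ IsRelPrime m n ∧
      r = e * m^2 ∧ w = e * m * n ∧ s = e * n^2 := by
  classical
  letI : GCDMonoid R2 := UniqueFactorizationMonoid.toGCDMonoid R2
  set d := gcd r w with hd
  have hdr : d ∣ r := gcd_dvd_left r w
  have hdw : d ∣ w := gcd_dvd_right r w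
  obtain ⟨m, hm⟩ := hdr
  obtain ⟨n, hn⟩ := hdw
  have hd0 : d ≠ 0 := fun hz => hr (by rw [hm, hz, zero_mul])
  have hm0 : m ≠ 0 := fun hz => hr (by rw [hm, hz, mul_zero])
  have hn0 : n ≠ 0 := fun hz => hw (by rw [hn, hz, mul_zero])
  have hassoc : Associated (gcd r w) (d * gcd m n) := by
    conv_lhs => rw [hm, hn]
    exact gcd_mul_left' d m n
  have hgu : IsUnit (gcd m n) := by
    obtain ⟨u, hu⟩ := hassoc
    rw [← hd] at hu
    exact ⟨u, mul_left_cancel₀ hd0 hu⟩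
  have hrel : IsRelPrime m n := gcd_isUnit_iff_isRelPrime.mp hgu
  have hcan : d * n^2 = m * s := by
    have h1 : d * (d * n^2) = d * (m * s) := by
      calc d * (d * n^2) = (d*n)^2 := by ring
        _ = w^2 := by rw [← hn]
        _ = r * s := hrs
        _ = d * (m * s) := by rw [hm]; ring
    exact mul_left_cancel₀ hd0 h1
  have hmd : m ∣ d := by
    have h2 : m ∣ d * n^2 := ⟨s, hcan⟩
    exact (hrel.pow_right (n := 2)).dvd_of_dvd_mul_right h2
  obtain ⟨e, he⟩ := hmd
  have he0 : e ≠ 0 := fun hz => hd0 (by rw [he, hz, mul_zero])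
  refine ⟨e, m, n, he0, hm0, hn0, hrel, ?_, ?_, ?_⟩
  · rw [hm, he]; ring
  · rw [hn, he]; ring
  · have : m * s = m * (e * n^2) := by rw [← hcan, he]; ring
    exact mul_left_cancel₀ hm0 this

/-- key step: a prime factor of `m` has vanishing x-derivative -/
lemma prime_factor_deriv0 {m n t : R2} (hm0 : m ≠ 0)
    (hDm : n * pderiv 0 m - m * pderiv 1 m = t * m)
    {π : R2} (hπ : Prime π) (hdvd : π ∣ m) (hπn : ¬ π ∣ n) :
    pderiv 0 π = 0 := by
  obtain ⟨j, h, hhd, hmeq⟩ := WfDvdMonoid.max_power_factor hm0 hπ.irreducible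
  have hj : j ≠ 0 := by
    intro hz
    rw [hz, pow_zero, one_mul] at hmeq
    rw [hmeq] at hdvd
    exact hhd hdvd
  obtain ⟨jj, rfl⟩ : ∃ jj, j = jj + 1 := ⟨j - 1, by omega⟩
  rw [hmeq, pderiv_mul, pderiv_mul, pderiv_pow, pderiv_pow] at hDm
  simp only [Nat.add_sub_cancel] at hDm
  have hπ0 : π ≠ 0 := hπ.ne_zero
  have hW : ((jj:R2)+1) * n * pderiv 0 π * h =
      π * (t*h - n * pderiv 0 h
        + h * (((jj:R2)+1) * π^jj * pderiv 1 π * h + π^(jj+1) * pderiv 1 h)) := by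
    apply mul_left_cancel₀ (pow_ne_zero jj hπ0)
    push_cast at hDm
    linear_combination hDm
  have hdvd1 : π ∣ ((jj:R2)+1) * n * pderiv 0 π * h := Dvd.intro _ hW.symm
  have hunit : IsUnit ((jj:R2)+1) := by
    have hC : ((jj:R2)+1) = C ((jj:K)+1) := by rw [C_add, C_1, C_eq_coe_nat]
    rw [hC]
    apply IsUnit.of_mul_eq_one (C ((jj:K)+1)⁻¹)
    rw [← C_mul, mul_inv_cancel₀ (Nat.cast_add_one_ne_zero jj), C_1]
  have hdvd1' : π ∣ ((jj:R2)+1) * (n * pderiv 0 π * h) := by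
    have hre : ((jj:R2)+1) * n * pderiv 0 π * h = ((jj:R2)+1) * (n * pderiv 0 π * h) := by ring
    rwa [hre] at hdvd1
  have hd2 : π ∣ n * pderiv 0 π * h := by
    obtain ⟨u, hu⟩ := hunit
    have : n * pderiv 0 π * h = ↑u⁻¹ * (((jj:R2)+1) * (n * pderiv 0 π * h)) := by
      rw [← hu, Units.inv_mul_cancel_left]
    rw [this]
    exact hdvd1'.mul_left _
  have hd3 : π ∣ pderiv 0 π := by
    rcases hπ.dvd_or_dvd (show π ∣ (n * pderiv 0 π) * h from by
      rwa [show (n * pderiv 0 π) * h = n * pderiv 0 π * h from rfl]) with h1 | h1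
    · rcases hπ.dvd_or_dvd h1 with h2 | h2
      · exact absurd h2 hπn
      · exact h2
    · exact absurd h1 hhd
  exact pderiv_eq_zero_of_self_dvd hd3

/-- closure under factorization -/
lemma pderiv_zero_of_all_prime_factors {i : Fin 2} (m : R2) (hm : m ≠ 0)
    (hfac : ∀ π : R2, Prime π → π ∣ m → pderiv i π = 0) : pderiv i m = 0 := by
  revert hm hfac
  induction m using UniqueFactorizationMonoid.induction_on_prime with
  | h₁ => intro hm _; exact absurd rfl hm
  | h₂ u hu =>
    intro _ _
    apply pderiv_eq_zero_of_totalDegree_eq_zero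
    have h1 : u ∣ 1 := isUnit_iff_dvd_one.mp hu
    have := totalDegree_le_of_dvd h1 one_ne_zero
    rw [totalDegree_one] at this
    omega
  | h₃ a p ha0 hp IH =>
    intro hm hfac
    rw [pderiv_mul]
    rw [hfac p hp (dvd_mul_right p a)]
    rw [IH ha0 (fun π hπ hd => hfac π hπ (hd.mul_left p))]
    ring

lemma prime_factor_deriv1 {m n t : R2} (hn0 : n ≠ 0)
    (hDn : n * pderiv 0 n - m * pderiv 1 n = t * n)
    {π : R2} (hπ : Prime π) (hdvd : π ∣ n) (hπm : ¬ π ∣ m) :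
    pderiv 1 π = 0 := by
  obtain ⟨j, h, hhd, hmeq⟩ := WfDvdMonoid.max_power_factor hn0 hπ.irreducible
  have hj : j ≠ 0 := by
    intro hz
    rw [hz, pow_zero, one_mul] at hmeq
    rw [hmeq] at hdvd
    exact hhd hdvd
  obtain ⟨jj, rfl⟩ : ∃ jj, j = jj + 1 := ⟨j - 1, by omega⟩
  rw [hmeq, pderiv_mul, pderiv_mul, pderiv_pow, pderiv_pow] at hDn
  simp only [Nat.add_sub_cancel] at hDn
  have hπ0 : π ≠ 0 := hπ.ne_zero
  have hW : ((jj:R2)+1) * m * pderiv 1 π * h =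
      π * (h * (((jj:R2)+1) * π^jj * pderiv 0 π * h + π^(jj+1) * pderiv 0 h)
        - m * pderiv 1 h - t * h) := by
    apply mul_left_cancel₀ (pow_ne_zero jj hπ0)
    push_cast at hDn
    linear_combination -hDn
  have hdvd1 : π ∣ ((jj:R2)+1) * m * pderiv 1 π * h := Dvd.intro _ hW.symm
  have hunit : IsUnit ((jj:R2)+1) := by
    have hC : ((jj:R2)+1) = C ((jj:K)+1) := by rw [C_add, C_1, C_eq_coe_nat]
    rw [hC]
    apply IsUnit.of_mul_eq_one (C ((jj:K)+1)⁻¹)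
    rw [← C_mul, mul_inv_cancel₀ (Nat.cast_add_one_ne_zero jj), C_1]
  have hdvd1' : π ∣ ((jj:R2)+1) * (m * pderiv 1 π * h) := by
    have hre : ((jj:R2)+1) * m * pderiv 1 π * h = ((jj:R2)+1) * (m * pderiv 1 π * h) := by ring
    rwa [hre] at hdvd1
  have hd2 : π ∣ m * pderiv 1 π * h := by
    obtain ⟨u, hu⟩ := hunit
    have : m * pderiv 1 π * h = ↑u⁻¹ * (((jj:R2)+1) * (m * pderiv 1 π * h)) := by
      rw [← hu, Units.inv_mul_cancel_left]
    rw [this]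
    exact hdvd1'.mul_left _
  have hd3 : π ∣ pderiv 1 π := by
    rcases hπ.dvd_or_dvd (show π ∣ (m * pderiv 1 π) * h from hd2) with h1 | h1
    · rcases hπ.dvd_or_dvd h1 with h2 | h2
      · exact absurd h2 hπm
      · exact h2
    · exact absurd h1 hhd
  exact pderiv_eq_zero_of_self_dvd hd3

theorem stmt_11' (P : R2)
    (hhess : (pderiv (0 : Fin 2) (pderiv (1 : Fin 2) P)) ^ 2
      - pderiv (0 : Fin 2) (pderiv (0 : Fin 2) P) * pderiv (1 : Fin 2) (pderiv (1 : Fin 2) P)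
      = 0) :
    ∃ (a b c₁ c₂ : K) (f : Polynomial K), f.coeff 0 = 0 ∧
      pderiv (1 : Fin 2) P =
        MvPolynomial.C b * Polynomial.aeval
          (MvPolynomial.C a * MvPolynomial.X 0 + MvPolynomial.C b * MvPolynomial.X 1) f
        + MvPolynomial.C c₂ ∧
      pderiv (0 : Fin 2) P =
        MvPolynomial.C a * Polynomial.aeval
          (MvPolynomial.C a * MvPolynomial.X 0 + MvPolynomial.C b * MvPolynomial.X 1) f
        - MvPolynomial.C c₁ := by
  classical
  set u := pderiv (0 : Fin 2) P with hu_def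
  set v := pderiv (1 : Fin 2) P with hv_def
  set r := pderiv (0 : Fin 2) u with hr_def
  set w := pderiv (0 : Fin 2) v with hw_def
  set s := pderiv (1 : Fin 2) v with hs_def
  have hrs : w^2 = r * s := by
    have := sub_eq_zero.mp hhess
    exact this
  have hu1 : pderiv (1 : Fin 2) u = w := by
    rw [hu_def, hw_def, hv_def]
    exact pderiv_pderiv_comm 1 0 P
  by_cases hr0 : r = 0
  · -- Case A : P_xx = 0, hence P_xy = 0, u is constant, v is a polynomial in X 1
    have hw0 : w = 0 := by
      have : w^2 = 0 := by rw [hrs, hr0, zero_mul]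
      exact pow_eq_zero_iff (n := 2) (by norm_num) |>.mp this
    obtain ⟨cu, hcu⟩ := eq_C_of_pderiv_eq_zero (hr0 : pderiv 0 u = 0)
      (by rw [hu1, hw0] : pderiv 1 u = 0)
    obtain ⟨g, hgv⟩ := eq_aeval_X1_of_pderiv0_eq_zero (hw0 : pderiv 0 v = 0)
    refine ⟨0, 1, -cu, g.coeff 0, g - Polynomial.C (g.coeff 0), by simp, ?_, ?_⟩
    · rw [hgv]
      rw [map_sub, Polynomial.aeval_C, algebraMap_eq]
      rw [map_zero, zero_mul, zero_add, map_one, one_mul]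
      ring
    · rw [hcu]
      rw [map_zero, zero_mul, map_neg]
      ring
  · by_cases hs0 : s = 0
    · -- Case B : P_yy = 0
      have hw0 : w = 0 := by
        have : w^2 = 0 := by rw [hrs, hs0, mul_zero]
        exact pow_eq_zero_iff (n := 2) (by norm_num) |>.mp this
      obtain ⟨cv, hcv⟩ := eq_C_of_pderiv_eq_zero (hw0 : pderiv 0 v = 0) (hs0 : pderiv 1 v = 0)
      obtain ⟨g, hgu⟩ := eq_aeval_X0_of_pderiv1_eq_zero
        (by rw [hu1, hw0] : pderiv 1 u = 0)
      refine ⟨1, 0, -(g.coeff 0), cv, g - Polynomial.C (g.coeff 0), by simp, ?_, ?_⟩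
      · rw [hcv, map_zero, zero_mul, zero_add]
      · rw [hgu]
        rw [map_sub, Polynomial.aeval_C, algebraMap_eq]
        rw [map_zero, zero_mul, add_zero, map_one, one_mul, map_neg]
        ring
    · -- Case C : the main case
      have hw0 : w ≠ 0 := by
        intro hz
        rw [hz] at hrs
        have : r * s = 0 := by rw [← hrs]; ring
        rcases mul_eq_zero.mp this with h | h
        · exact hr0 h
        · exact hs0 h
      obtain ⟨e, m, n, he0, hm0, hn0, hrel, hre, hwe, hse⟩ := rank_one_factor hr0 hw0 hrs
      -- curl identities
      have hE1 : pderiv (1 : Fin 2) r = pderiv (0 : Fin 2) w := by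
        rw [hr_def, ← hu1]
        exact pderiv_pderiv_comm 1 0 u
      have hE2 : pderiv (1 : Fin 2) w = pderiv (0 : Fin 2) s := by
        rw [hw_def, hs_def]
        exact pderiv_pderiv_comm 1 0 v
      rw [hre, hwe] at hE1
      rw [hwe, hse] at hE2
      simp only [pderiv_mul, pderiv_pow] at hE1 hE2
      push_cast at hE1 hE2
      norm_num at hE1 hE2
      -- relation n * Dm = m * Dn
      have hF1 : e * (n * (n * pderiv 0 m - m * pderiv 1 m)
          - m * (n * pderiv 0 n - m * pderiv 1 n)) = 0 := by
        linear_combination m * hE2 - n * hE1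
      have hF2 : n * (n * pderiv 0 m - m * pderiv 1 m)
          = m * (n * pderiv 0 n - m * pderiv 1 n) := by
        have := (mul_eq_zero.mp hF1).resolve_left he0
        linear_combination this
      obtain ⟨t, ht⟩ : m ∣ (n * pderiv 0 m - m * pderiv 1 m) := by
        apply hrel.dvd_of_dvd_mul_left
        exact ⟨(n * pderiv 0 n - m * pderiv 1 n), hF2⟩
      have ht' : n * pderiv 0 m - m * pderiv 1 m = t * m := by rw [ht]; ring
      have hDn : n * pderiv 0 n - m * pderiv 1 n = t * n := by
        apply mul_left_cancel₀ hm0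
        rw [← hF2, ht']
        ring
      -- m depends only on y, n only on x
      have hmx : pderiv (0 : Fin 2) m = 0 := by
        apply pderiv_zero_of_all_prime_factors m hm0
        intro π hπ hd
        exact prime_factor_deriv0 hm0 ht' hπ hd
          (fun hdn => hπ.not_unit (hrel hd hdn))
      have hny : pderiv (1 : Fin 2) n = 0 := by
        apply pderiv_zero_of_all_prime_factors n hn0
        intro π hπ hd
        exact prime_factor_deriv1 hn0 hDn hπ hd
          (fun hdm => hπ.not_unit (hrel hdm hd))
      have htm : pderiv (1 : Fin 2) m = -t := by
        apply mul_left_cancel₀ hm0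
        rw [hmx] at ht'
        linear_combination -ht'
      have htn : pderiv (0 : Fin 2) n = t := by
        apply mul_left_cancel₀ hn0
        rw [hny] at hDn
        linear_combination hDn
      -- t is a constant
      have ht0 : pderiv (0 : Fin 2) t = 0 := by
        have h1 : pderiv (0 : Fin 2) (pderiv 1 m) = 0 := by
          rw [pderiv_pderiv_comm, hmx, map_zero]
        have h2 : pderiv (0 : Fin 2) (-t) = 0 := by rw [← htm]; exact h1
        rw [map_neg, neg_eq_zero] at h2
        exact h2
      have ht1 : pderiv (1 : Fin 2) t = 0 := by
        have h1 : pderiv (1 : Fin 2) (pderiv 0 n) = 0 := by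
          rw [pderiv_pderiv_comm, hny, map_zero]
        rw [← htn]
        exact h1
      obtain ⟨k, hk⟩ := eq_C_of_pderiv_eq_zero ht0 ht1
      -- linear forms for m and n
      have hnlin : ∃ b₀ : K, n = C k * X 0 + C b₀ := by
        have h0 : pderiv (0 : Fin 2) (n - C k * X 0) = 0 := by
          rw [map_sub, pderiv_C_mul, pderiv_X_self, mul_one, htn, hk, sub_self]
        have h1 : pderiv (1 : Fin 2) (n - C k * X 0) = 0 := by
          rw [map_sub, pderiv_C_mul, pderiv_X_of_ne (show (0:Fin 2) ≠ 1 by decide), hny]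
          ring
        obtain ⟨b₀, hb₀⟩ := eq_C_of_pderiv_eq_zero h0 h1
        exact ⟨b₀, by linear_combination hb₀⟩
      have hmlin : ∃ a₀ : K, m = C a₀ - C k * X 1 := by
        have h0 : pderiv (0 : Fin 2) (m + C k * X 1) = 0 := by
          rw [map_add, pderiv_C_mul, pderiv_X_of_ne (show (1:Fin 2) ≠ 0 by decide), hmx]
          ring
        have h1 : pderiv (1 : Fin 2) (m + C k * X 1) = 0 := by
          rw [map_add, pderiv_C_mul, pderiv_X_self, mul_one, htm, hk]
          ring
        obtain ⟨a₀, ha₀⟩ := eq_C_of_pderiv_eq_zero h0 h1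
        exact ⟨a₀, by linear_combination ha₀⟩
      obtain ⟨b₀, hnlin⟩ := hnlin
      obtain ⟨a₀, hmlin⟩ := hmlin
      -- show k = 0
      have hk0 : k = 0 := by
        by_contra hkne
        -- derive the Euler equation for e
        have hG2 : m * (n * pderiv 0 e - m * pderiv 1 e)
            = m * ((pderiv 1 m - pderiv 0 n - t) * e) := by
          linear_combination -hE1 - e * ht'
        have hDe : n * pderiv 0 e - m * pderiv 1 e = (pderiv 1 m - pderiv 0 n - t) * e :=
          mul_left_cancel₀ hm0 hG2
        rw [htm, htn, hk, hnlin, hmlin] at hDe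
        apply he0
        apply euler_eq_zero (k := k) (b := b₀) (c := -a₀) hkne
        have hC3 : (C (-(3*k)) : R2) = -C k - C k - C k := by
          rw [show -(3*k) = -k + -k + -k from by ring, map_add, map_add, map_neg]
          ring
        have hCa : (C (-a₀) : R2) = -C a₀ := map_neg _ _
        rw [hC3, hCa]
        linear_combination hDe
      rw [hk0, map_zero, zero_mul] at hnlin hmlin
      rw [zero_add] at hnlin
      rw [sub_zero] at hmlin
      have ha₀ : a₀ ≠ 0 := fun hz => hm0 (by rw [hmlin, hz, map_zero])
      have hb₀ : b₀ ≠ 0 := fun hz => hn0 (by rw [hnlin, hz, map_zero])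
      rw [hmlin] at hre hwe
      rw [hnlin] at hwe hse
      -- direction for v, apply the substitution lemma
      have hvdir : C b₀ * pderiv 0 v = C a₀ * pderiv 1 v := by
        rw [← hw_def, ← hs_def, hwe, hse]
        ring
      obtain ⟨g, hg⟩ := eq_aeval_linear (a := a₀) hb₀ hvdir
      -- the constant combination
      have hz0 : pderiv (0 : Fin 2) (C a₀ * v - C b₀ * u) = 0 := by
        rw [map_sub, pderiv_C_mul, pderiv_C_mul, ← hw_def, ← hr_def, hwe, hre]
        ring
      have hz1 : pderiv (1 : Fin 2) (C a₀ * v - C b₀ * u) = 0 := by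
        rw [map_sub, pderiv_C_mul, pderiv_C_mul, ← hs_def, hse, hu1, hwe]
        ring
      obtain ⟨γ, hγ⟩ := eq_C_of_pderiv_eq_zero hz0 hz1
      set L : R2 := C a₀ * X 0 + C b₀ * X 1 with hL
      set c₂ := g.coeff 0 with hc₂
      set f := Polynomial.C b₀⁻¹ * (g - Polynomial.C c₂) with hf
      have haef : Polynomial.aeval L f = C b₀⁻¹ * (Polynomial.aeval L g - C c₂) := by
        rw [hf, map_mul, map_sub, Polynomial.aeval_C, Polynomial.aeval_C, algebraMap_eq]
      have hveq : v = C b₀ * Polynomial.aeval L f + C c₂ := by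
        rw [haef, hg]
        rw [show (C b₀ : R2) * (C b₀⁻¹ * (Polynomial.aeval L g - C c₂))
          = (C b₀ * C b₀⁻¹) * (Polynomial.aeval L g - C c₂) from by ring]
        rw [← C_mul, mul_inv_cancel₀ hb₀, C_1, one_mul]
        ring
      refine ⟨a₀, b₀, (γ - a₀ * c₂)/b₀, c₂, f, ?_, hveq, ?_⟩
      · rw [hf, Polynomial.coeff_C_mul, Polynomial.coeff_sub, Polynomial.coeff_C_zero,
          ← hc₂, sub_self, mul_zero]
      · apply mul_left_cancel₀ (show (C b₀ : R2) ≠ 0 from fun hc => hb₀ (by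
          simpa using congrArg (coeff 0) hc))
        have hbc : b₀ * ((γ - a₀ * c₂)/b₀) = γ - a₀ * c₂ := by
          field_simp
        calc C b₀ * u = C a₀ * v - C γ := by linear_combination -hγ
          _ = C a₀ * (C b₀ * Polynomial.aeval L f + C c₂) - C γ := by rw [← hveq]
          _ = C b₀ * (C a₀ * Polynomial.aeval L f - C ((γ - a₀ * c₂)/b₀)) := by
              have hcc : (C b₀ : R2) * C ((γ - a₀ * c₂)/b₀) = C (γ - a₀ * c₂) := by
                rw [← C_mul, hbc]
              have hcc2 : (C (γ - a₀ * c₂) : R2) = C γ - C a₀ * C c₂ := by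
                rw [map_sub, C_mul]
              linear_combination hcc + hcc2

end Stmt11Aux


/-- If `P ∈ K[x,y]` (K algebraically closed, char 0) has vanishing Hessian
determinant `P_{xy}² − P_{xx}·P_{yy} = 0`, then there are constants `a, b, c₁, c₂ ∈ K` and
`f ∈ K[t]` with `f(0) = 0` such that `P_y = b·f(ax+by) + c₂` and `P_x = a·f(ax+by) − c₁`. -/
theorem stmt_11 (K : Type*) [Field K] [IsAlgClosed K] [CharZero K]
    (P : MvPolynomial (Fin 2) K)
    (hhess : (pderiv (0 : Fin 2) (pderiv (1 : Fin 2) P)) ^ 2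
      - pderiv (0 : Fin 2) (pderiv (0 : Fin 2) P) * pderiv (1 : Fin 2) (pderiv (1 : Fin 2) P)
      = 0) :
    ∃ (a b c₁ c₂ : K) (f : Polynomial K), f.coeff 0 = 0 ∧
      pderiv (1 : Fin 2) P =
        MvPolynomial.C b * Polynomial.aeval
          (MvPolynomial.C a * MvPolynomial.X 0 + MvPolynomial.C b * MvPolynomial.X 1) f
        + MvPolynomial.C c₂ ∧
      pderiv (0 : Fin 2) P =
        MvPolynomial.C a * Polynomial.aeval
          (MvPolynomial.C a * MvPolynomial.X 0 + MvPolynomial.C b * MvPolynomial.X 1) f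
        - MvPolynomial.C c₁ :=
  Stmt11Aux.stmt_11' P hhess
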